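/- arXiv:2508.17077 — 2 statements merged into one kernel-verified Lean document; each statement's English description precedes it below -/
import Mathlib

section
/- Let (S_1, ..., S_B, S_{B+1}) be exchangeable real-valued random variables. Let t be the ⌈(1-α)(B+1)⌉-th smallest value among S_1, ..., S_B (with t = +∞ if ⌈(1-α)(B+1)⌉ > B). Then P(S_{B+1} ≤ t) ≥ 1 - α. -/
open MeasureTheory ProbabilityTheory Finset

/-- The `k`-th smallest value among `v 0, …, v (B-1)`, as an extended real:
it is the infimum of all `x` such that at least `k` of the values are `≤ x`
(equal to `+∞` when `k > B`, since then no such `x` exists). -/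
noncomputable def kthSmallest {B : ℕ} (v : Fin B → ℝ) (k : ℕ) : EReal :=
  open Classical in
  sInf {x : EReal | k ≤ (Finset.univ.filter (fun i => (v i : EReal) ≤ x)).card}

open Classical in
lemma le_kthSmallest_iff {B : ℕ} (v : Fin B → ℝ) (k : ℕ) (y : ℝ) :
    (y : EReal) ≤ kthSmallest v k ↔ (univ.filter fun i => v i < y).card < k := by
  unfold kthSmallest
  constructor
  · intro h
    by_contra hc
    push_neg at hc
    -- k ≤ card {i | v i < y}
    rcases Nat.eq_zero_or_pos k with hk0 | hkpos
    · have : sInf {x : EReal | k ≤ (univ.filter (fun i => (v i : EReal) ≤ x)).card} ≤ ⊥ :=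
        sInf_le (by simp [hk0])
      exact absurd (le_trans h this) (by simp [EReal.bot_lt_coe y, not_le])
    · have hne : (univ.filter fun i => v i < y).Nonempty := by
        rw [← Finset.card_pos]; omega
      set x0 : ℝ := (univ.filter fun i => v i < y).sup' hne v with hx0
      have hx0y : x0 < y := by
        apply Finset.sup'_lt_iff hne |>.mpr
        intro i hi; exact (Finset.mem_filter.mp hi).2
      have hx0T : (x0 : EReal) ∈ {x : EReal | k ≤ (univ.filter (fun i => (v i : EReal) ≤ x)).card} := by
        refine le_trans hc (Finset.card_le_card ?_)
        intro i hi
        rw [Finset.mem_filter]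
        refine ⟨Finset.mem_univ _, ?_⟩
        exact_mod_cast Finset.le_sup' v hi
      have := sInf_le hx0T
      have := le_trans h this
      exact absurd (EReal.coe_le_coe_iff.mp this) (not_le.mpr hx0y)
  · intro h
    apply le_sInf
    intro x hx
    by_contra hyx
    push_neg at hyx
    have hsub : (univ.filter (fun i => (v i : EReal) ≤ x)) ⊆ (univ.filter fun i => v i < y) := by
      intro i hi
      rw [Finset.mem_filter] at hi ⊢
      refine ⟨hi.1, ?_⟩
      exact_mod_cast lt_of_le_of_lt hi.2 hyx
    have := Finset.card_le_card hsub
    have hxk : k ≤ (univ.filter (fun i => (v i : EReal) ≤ x)).card := hx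
    omega

open Classical in
lemma card_filter_comp_perm {n : ℕ} (σ : Equiv.Perm (Fin n)) (p : Fin n → Prop) :
    (univ.filter fun i => p (σ i)).card = (univ.filter p).card := by
  rw [Finset.card_filter, Finset.card_filter]
  exact Equiv.sum_comp σ (fun i => if p i then 1 else 0)

open Classical in
lemma key_count {n k : ℕ} (hk : k ≤ n) (v : Fin n → ℝ) :
    k ≤ (univ.filter fun j => (univ.filter fun i => v i < v j).card < k).card := by
  set σ := Tuple.sort v with hσ
  have hmono : Monotone (v ∘ σ) := Tuple.monotone_sort v
  have hmem : ∀ m : Fin k, σ (Fin.castLE hk m) ∈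
      (univ.filter fun j => (univ.filter fun i => v i < v j).card < k) := by
    intro m
    rw [Finset.mem_filter]
    refine ⟨Finset.mem_univ _, ?_⟩
    set m' : Fin n := Fin.castLE hk m with hm'
    have h1 : (univ.filter fun i => v i < v (σ m')).card
        = (univ.filter fun i => v (σ i) < v (σ m')).card :=
      (card_filter_comp_perm σ (fun i => v i < v (σ m'))).symm
    have h2 : (univ.filter fun i => v (σ i) < v (σ m')) ⊆ Finset.Iio m' := by
      intro i hi
      rw [Finset.mem_filter] at hi
      rw [Finset.mem_Iio]
      by_contra hge
      push_neg at hge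
      exact absurd hi.2 (not_lt.mpr (hmono hge))
    have h3 := Finset.card_le_card h2
    rw [Fin.card_Iio] at h3
    have : (m' : ℕ) < k := by simp only [hm', Fin.coe_castLE]; exact m.2
    omega
  have hinj : Function.Injective (fun m : Fin k => σ (Fin.castLE hk m)) :=
    σ.injective.comp (Fin.castLE_injective hk)
  calc k = (univ : Finset (Fin k)).card := by simp
    _ ≤ _ := Finset.card_le_card_of_injOn _ (fun m _ => hmem m) hinj.injOn

/-- **Split-conformal coverage lemma.** If `S 0, …, S B` are exchangeable real-valued
random variables and `t` is the `⌈(1-α)(B+1)⌉`-th smallest value among the first `B`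
of them (`+∞` if `⌈(1-α)(B+1)⌉ > B`), then `P(S_{B+1} ≤ t) ≥ 1 - α`. -/
theorem conformal_marginal_coverage
    {Ω : Type*} [MeasurableSpace Ω] (P : Measure Ω) [IsProbabilityMeasure P]
    (B : ℕ) (α : ℝ) (hα : α ∈ Set.Ioo (0 : ℝ) 1)
    (S : Fin (B + 1) → Ω → ℝ) (hSmeas : ∀ i, Measurable (S i))
    (hexch : ∀ σ : Equiv.Perm (Fin (B + 1)),
      P.map (fun ω => fun i => S (σ i) ω) = P.map (fun ω => fun i => S i ω)) :
    1 - α ≤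
      (P {ω | (S (Fin.last B) ω : EReal) ≤
        kthSmallest (fun i : Fin B => S i.castSucc ω)
          ⌈(1 - α) * (B + 1)⌉₊}).toReal := by
  classical
  obtain ⟨hα0, hα1⟩ := hα
  set k := ⌈(1 - α) * (B + 1)⌉₊ with hkdef
  have hBpos : (0 : ℝ) < (B : ℝ) + 1 := by positivity
  have hkn : k ≤ B + 1 := by
    rw [hkdef, Nat.ceil_le]
    push_cast
    nlinarith
  have hklb : (1 - α) * (B + 1) ≤ (k : ℝ) := Nat.le_ceil _
  -- vector map
  set vecS : Ω → (Fin (B + 1) → ℝ) := fun ω i => S i ω with hvecS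
  have hvecSm : Measurable vecS := measurable_pi_lambda _ (fun i => hSmeas i)
  set μ : Measure (Fin (B + 1) → ℝ) := P.map vecS with hμ
  -- the sets A j
  set A : Fin (B + 1) → Set (Fin (B + 1) → ℝ) :=
    fun j => {v | (univ.filter fun i => v i < v j).card < k} with hA
  have hcardmeas : ∀ j, Measurable (fun v : Fin (B + 1) → ℝ =>
      (univ.filter fun i => v i < v j).card) := by
    intro j
    have : (fun v : Fin (B + 1) → ℝ => (univ.filter fun i => v i < v j).card)
        = fun v => ∑ i : Fin (B + 1), if v i < v j then 1 else 0 := by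
      funext v; rw [Finset.card_filter]
    rw [this]
    apply Finset.measurable_sum
    intro i _
    exact Measurable.ite (measurableSet_lt (measurable_pi_apply i) (measurable_pi_apply j))
      measurable_const measurable_const
  have hAmeas : ∀ j, MeasurableSet (A j) := by
    intro j
    exact (hcardmeas j) (MeasurableSet.of_discrete (s := Set.Iio k))
  have hμprob : IsProbabilityMeasure μ := Measure.isProbabilityMeasure_map hvecSm.aemeasurable
  -- all A j have the same measure
  have hAeq : ∀ j, μ (A j) = μ (A (Fin.last B)) := by
    intro j
    set σ := Equiv.swap j (Fin.last B) with hσdef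
    have hg : Measurable (fun ω => fun i => S (σ i) ω) :=
      measurable_pi_lambda _ (fun i => hSmeas (σ i))
    have hσexch := hexch σ
    have hpre : (fun ω => fun i => S (σ i) ω) ⁻¹' A (Fin.last B) = vecS ⁻¹' A j := by
      ext ω
      simp only [Set.mem_preimage, hA, Set.mem_setOf_eq, hvecS]
      have h1 : σ (Fin.last B) = j := Equiv.swap_apply_right j (Fin.last B)
      simp only [h1]
      rw [card_filter_comp_perm σ (fun i => S i ω < S j ω)]
    calc μ (A j) = P (vecS ⁻¹' A j) := Measure.map_apply hvecSm (hAmeas j)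
      _ = P ((fun ω => fun i => S (σ i) ω) ⁻¹' A (Fin.last B)) := by rw [hpre]
      _ = (P.map (fun ω => fun i => S (σ i) ω)) (A (Fin.last B)) :=
          (Measure.map_apply hg (hAmeas _)).symm
      _ = μ (A (Fin.last B)) := by rw [hσexch]
  -- sum of measures is at least k
  have hsum : (k : ENNReal) ≤ ∑ j : Fin (B + 1), μ (A j) := by
    have hpt : ∀ v : Fin (B + 1) → ℝ,
        (k : ENNReal) ≤ ∑ j : Fin (B + 1), (A j).indicator (fun _ => (1 : ENNReal)) v := by
      intro v
      have : ∑ j : Fin (B + 1), (A j).indicator (fun _ => (1 : ENNReal)) v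
          = ((univ.filter fun j => v ∈ A j).card : ENNReal) := by
        rw [Finset.card_filter]
        push_cast
        apply Finset.sum_congr rfl
        intro j _
        by_cases hj : v ∈ A j <;> simp [hj, Set.indicator]
      rw [this]
      have hkey := key_count hkn v
      have : (univ.filter fun j => v ∈ A j) = (univ.filter fun j =>
          (univ.filter fun i => v i < v j).card < k) := by
        apply Finset.filter_congr
        intro j _
        simp [hA]
      rw [this]
      exact_mod_cast hkey
    calc (k : ENNReal) = ∫⁻ _, (k : ENNReal) ∂μ := by simp
      _ ≤ ∫⁻ v, ∑ j : Fin (B + 1), (A j).indicator (fun _ => (1 : ENNReal)) v ∂μ :=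
          lintegral_mono hpt
      _ = ∑ j : Fin (B + 1), ∫⁻ v, (A j).indicator (fun _ => (1 : ENNReal)) v ∂μ :=
          lintegral_finset_sum _ (fun j _ => measurable_const.indicator (hAmeas j))
      _ = ∑ j : Fin (B + 1), μ (A j) := by
          apply Finset.sum_congr rfl
          intro j _
          exact lintegral_indicator_one (hAmeas j)
  have hsum2 : ∑ j : Fin (B + 1), μ (A j) = (B + 1 : ℕ) * μ (A (Fin.last B)) := by
    rw [Finset.sum_congr rfl (fun j _ => hAeq j), Finset.sum_const, Finset.card_univ,
      Fintype.card_fin, nsmul_eq_mul]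
  have hbound : (k : ENNReal) ≤ (B + 1 : ℕ) * μ (A (Fin.last B)) := hsum2 ▸ hsum
  -- identify the event
  have hcard' : ∀ ω, (univ.filter fun i : Fin B => S i.castSucc ω < S (Fin.last B) ω).card
      = (univ.filter fun i : Fin (B + 1) => S i ω < S (Fin.last B) ω).card := by
    intro ω
    rw [Finset.card_filter, Finset.card_filter, Fin.sum_univ_castSucc]
    simp
  have hev : {ω | (S (Fin.last B) ω : EReal) ≤
      kthSmallest (fun i : Fin B => S i.castSucc ω) k} = vecS ⁻¹' A (Fin.last B) := by
    ext ω
    simp only [Set.mem_setOf_eq, Set.mem_preimage, hA, hvecS]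
    rw [le_kthSmallest_iff]
    constructor
    · intro h; rw [← hcard' ω]; convert h using 2
    · intro h; rw [hcard' ω]; convert h using 2
  have hPev : P {ω | (S (Fin.last B) ω : EReal) ≤
      kthSmallest (fun i : Fin B => S i.castSucc ω) k} = μ (A (Fin.last B)) := by
    rw [hev, hμ, Measure.map_apply hvecSm (hAmeas _)]
  rw [hPev]
  -- final arithmetic
  have hfin : μ (A (Fin.last B)) ≠ ⊤ := measure_ne_top μ _
  set p := (μ (A (Fin.last B))).toReal with hp
  have hreal : (k : ℝ) ≤ ((B : ℝ) + 1) * p := by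
    have h2 : ((k : ENNReal)).toReal ≤ ((B + 1 : ℕ) * μ (A (Fin.last B))).toReal :=
      ENNReal.toReal_mono (by
        exact ENNReal.mul_ne_top (by simp) hfin) hbound
    rw [ENNReal.toReal_mul] at h2
    simpa [ENNReal.toReal_add] using h2
  nlinarith
end

section
/- Let {A_1, ..., A_J} be a fixed measurable partition of the feature space 𝒳, and suppose the calibration pairs {(θ_i, X_i)}_{i=1}^B and the test pair (θ, X) are i.i.d. For x ∈ A_j, let t(x) be the ⌈(1-α)(n_j+1)⌉-th smallest calibration score among {s(θ_i; X_i) : X_i ∈ A_j}, where n_j = #{i : X_i ∈ A_j}, and define C(x) = {θ : s(θ; x) ≤ t(x)}. Then for each j with P(X ∈ A_j) > 0, P(θ ∈ C(X) | X ∈ A_j) ≥ 1 - α. -/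
open MeasureTheory ProbabilityTheory Finset
open scoped ENNReal

/-- The `⌈(1-α)(n+1)⌉`-th smallest score among the calibration points whose feature
falls into the given cell `Aj`, as an extended real (`+∞` when there are not enough
points). Here `n` is the number of calibration points in the cell. -/
noncomputable def localThreshold {Ω 𝒯 𝒳 : Type*} {B : ℕ}
    (θ : Fin B → Ω → 𝒯) (X : Fin B → Ω → 𝒳) (s : 𝒯 → 𝒳 → ℝ)
    (Aj : Set 𝒳) (α : ℝ) (ω : Ω) : EReal :=
  open Classical in
  sInf {x : EReal |
    ⌈(1 - α) * ((Finset.univ.filter (fun i : Fin B => X i ω ∈ Aj)).card + 1)⌉₊ ≤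
      (Finset.univ.filter
        (fun i : Fin B => X i ω ∈ Aj ∧ (s (θ i ω) (X i ω) : EReal) ≤ x)).card}

section Aux

open Classical

/-- In any finite family, at least `k` elements have strict rank `< k` (if `k ≤ card`). -/
lemma aux_rank_count {ι : Type*} (T : Finset ι) (v : ι → ℝ) (k : ℕ) (hk : k ≤ T.card) :
    k ≤ (T.filter fun i => (T.filter fun l => v l < v i).card < k).card := by
  classical
  set S := T.filter (fun i => k ≤ (T.filter fun l => v l < v i).card) with hS
  rcases S.eq_empty_or_nonempty with h | h
  · have hT : T.filter (fun i => (T.filter fun l => v l < v i).card < k) = T := by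
      apply Finset.filter_true_of_mem
      intro i hi
      by_contra hco
      have : i ∈ S := Finset.mem_filter.mpr ⟨hi, le_of_not_gt hco⟩
      simp [h] at this
    rw [hT]; exact hk
  · obtain ⟨i₀, hi₀, hmin⟩ := S.exists_min_image v h
    have hk0 : k ≤ (T.filter fun l => v l < v i₀).card := (Finset.mem_filter.mp hi₀).2
    refine hk0.trans (Finset.card_le_card ?_)
    intro l hl
    obtain ⟨hlT, hlv⟩ := Finset.mem_filter.mp hl
    refine Finset.mem_filter.mpr ⟨hlT, ?_⟩
    by_contra hco
    have hlS : l ∈ S := Finset.mem_filter.mpr ⟨hlT, le_of_not_gt hco⟩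
    exact absurd hlv (not_lt.mpr (hmin l hlS))

/-- Rank characterization of membership below the `k`-th smallest score. -/
lemma aux_thresh {B : ℕ} (c : Fin B → Prop) (g : Fin B → ℝ) (S : ℝ) (k : ℕ) (hk : 1 ≤ k) :
    ((S : EReal) ≤ sInf {x : EReal |
        k ≤ (Finset.univ.filter fun i => c i ∧ (g i : EReal) ≤ x).card}
      ↔ (Finset.univ.filter fun i => c i ∧ g i < S).card < k) := by
  constructor
  · intro hle
    by_contra hco
    push_neg at hco
    have hTne : (Finset.univ.filter fun i : Fin B => c i ∧ g i < S).Nonempty :=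
      Finset.card_pos.mp (hk.trans hco)
    obtain ⟨i₀, hi₀, hmax⟩ := Finset.exists_max_image _ g hTne
    have h1 : ((g i₀ : EReal)) ∈ {x : EReal |
        k ≤ (Finset.univ.filter fun i => c i ∧ (g i : EReal) ≤ x).card} := by
      refine le_trans hco (Finset.card_le_card ?_)
      intro l hl
      have hm := Finset.mem_filter.mp hl
      exact Finset.mem_filter.mpr ⟨hm.1, hm.2.1, EReal.coe_le_coe_iff.mpr (hmax l hl)⟩
    have h2 := sInf_le h1
    have h3 : (g i₀ : EReal) < (S : EReal) :=
      EReal.coe_lt_coe_iff.mpr (Finset.mem_filter.mp hi₀).2.2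
    exact (not_le.mpr h3) (hle.trans h2)
  · intro hlt
    apply le_sInf
    intro x hx
    by_contra hco
    push_neg at hco
    have hsub : (Finset.univ.filter fun i => c i ∧ (g i : EReal) ≤ x)
        ⊆ (Finset.univ.filter fun i => c i ∧ g i < S) := by
      intro l hl
      have hm := Finset.mem_filter.mp hl
      exact Finset.mem_filter.mpr ⟨hm.1, hm.2.1,
        EReal.coe_lt_coe_iff.mp (lt_of_le_of_lt hm.2.2 hco)⟩
    exact lt_irrefl k (lt_of_le_of_lt (hx.trans (Finset.card_le_card hsub)) hlt)

lemma aux_card_castSucc {n : ℕ} (p : Fin (n + 1) → Prop) [DecidablePred p]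
    [DecidablePred fun i : Fin n => p i.castSucc] :
    (Finset.univ.filter p).card
      = (Finset.univ.filter fun i : Fin n => p i.castSucc).card
        + if p (Fin.last n) then 1 else 0 := by
  rw [Finset.card_filter, Fin.sum_univ_castSucc, Finset.card_filter]
  congr!

lemma aux_card_perm {n : ℕ} (e : Equiv.Perm (Fin n)) (q : Fin n → Prop) [DecidablePred q]
    [DecidablePred fun l => q (e l)] :
    (Finset.univ.filter fun l => q (e l)).card = (Finset.univ.filter q).card := by
  refine Finset.card_equiv e fun i => ?_
  simp

variable {W : Type*}

/-- Number of sample points in the cell `C`. -/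
noncomputable def ccount {n : ℕ} (C : Set W) (y : Fin n → W) : ℕ :=
  (Finset.univ.filter fun i => y i ∈ C).card

/-- In-cell strict rank of the `i`-th score. -/
noncomputable def crank {n : ℕ} (C : Set W) (f : W → ℝ) (y : Fin n → W) (i : Fin n) : ℕ :=
  (Finset.univ.filter fun l => y l ∈ C ∧ f (y l) < f (y i)).card

/-- The "good" event for index `i`: it lies in the cell and its in-cell rank is small. -/
noncomputable def GG {n : ℕ} (C : Set W) (f : W → ℝ) (α : ℝ) (i : Fin n) :
    Set (Fin n → W) :=
  {y | y i ∈ C ∧ crank C f y i < ⌈(1 - α) * (ccount C y : ℝ)⌉₊}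

variable [MeasurableSpace W]

lemma meas_ccount {n : ℕ} {C : Set W} (hC : MeasurableSet C) :
    Measurable fun y : Fin n → W => ccount C y := by
  have h : (fun y : Fin n → W => ccount C y)
      = fun y => ∑ i : Fin n, if y i ∈ C then 1 else 0 := by
    funext y; exact Finset.card_filter _ _
  rw [h]
  refine Finset.measurable_sum _ fun i _ => ?_
  exact Measurable.ite ((measurable_pi_apply i) hC) measurable_const measurable_const

lemma meas_crank {n : ℕ} {C : Set W} {f : W → ℝ} (hC : MeasurableSet C)
    (hf : Measurable f) (i : Fin n) :
    Measurable fun y : Fin n → W => crank C f y i := by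
  have h : (fun y : Fin n → W => crank C f y i)
      = fun y => ∑ l : Fin n, if y l ∈ C ∧ f (y l) < f (y i) then 1 else 0 := by
    funext y; exact Finset.card_filter _ _
  rw [h]
  refine Finset.measurable_sum _ fun l _ => ?_
  refine Measurable.ite ?_ measurable_const measurable_const
  exact MeasurableSet.inter ((measurable_pi_apply l) hC)
    (measurableSet_lt (hf.comp (measurable_pi_apply l)) (hf.comp (measurable_pi_apply i)))

lemma meas_GG {n : ℕ} {C : Set W} {f : W → ℝ} (hC : MeasurableSet C)
    (hf : Measurable f) (α : ℝ) (i : Fin n) :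
    MeasurableSet (GG C f α i) := by
  have h : GG C f α i = ((fun y : Fin n → W => y i) ⁻¹' C)
      ∩ ((fun y => (crank C f y i, ccount C y))
          ⁻¹' {p : ℕ × ℕ | p.1 < ⌈(1 - α) * (p.2 : ℝ)⌉₊}) := by
    ext y; rfl
  rw [h]
  exact ((measurable_pi_apply i) hC).inter
    (((meas_crank hC hf i).prodMk (meas_ccount hC))
      (Set.to_countable _).measurableSet)

lemma GG_perm {n : ℕ} (C : Set W) (f : W → ℝ) (α : ℝ) (e : Equiv.Perm (Fin n))
    (x : Fin n → W) (i : Fin n) :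
    ((fun l => x (e l)) ∈ GG C f α i ↔ x ∈ GG C f α (e i)) := by
  have h1 : ccount C (fun l => x (e l)) = ccount C x := by
    unfold ccount; exact aux_card_perm e (fun l => x l ∈ C)
  have h2 : crank C f (fun l => x (e l)) i = crank C f x (e i) := by
    unfold crank; exact aux_card_perm e (fun l => x l ∈ C ∧ f (x l) < f (x (e i)))
  simp only [GG, Set.mem_setOf_eq, h1, h2]

/-- The deterministic counting bound: at least `⌈(1-α)m⌉` of the indices are "good". -/
lemma GG_count {n : ℕ} (C : Set W) (f : W → ℝ) {α : ℝ} (hα0 : 0 ≤ α) (y : Fin n → W) :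
    ⌈(1 - α) * (ccount C y : ℝ)⌉₊ ≤ (Finset.univ.filter fun i => y ∈ GG C f α i).card := by
  set T := Finset.univ.filter fun i : Fin n => y i ∈ C with hT
  have hTc : ccount C y = T.card := rfl
  have hkT : ⌈(1 - α) * (ccount C y : ℝ)⌉₊ ≤ T.card := by
    rw [Nat.ceil_le, hTc]
    nlinarith [Nat.cast_nonneg (α := ℝ) T.card]
  have h := aux_rank_count T (fun i => f (y i)) _ hkT
  refine h.trans (Finset.card_le_card ?_)
  intro i hi
  obtain ⟨hiT, hrk⟩ := Finset.mem_filter.mp hi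
  refine Finset.mem_filter.mpr ⟨Finset.mem_univ i, ?_⟩
  have hiC : y i ∈ C := (Finset.mem_filter.mp hiT).2
  refine ⟨hiC, ?_⟩
  have hrw : crank C f y i = (T.filter fun l => f (y l) < f (y i)).card := by
    rw [hT, Finset.filter_filter]
    rfl
  rw [hrw]
  exact hrk

end Aux

/-- **Local (Mondrian/LoCart-style) conformal coverage.** With a fixed measurable
partition `A 1, …, A J` of the feature space and i.i.d. calibration and test pairs,
the locally conformalized credible set achieves `1 - α` coverage conditionally on
the cell containing the test feature. -/
theorem local_conformal_coverage
    {Ω 𝒯 𝒳 : Type*} [MeasurableSpace Ω] [MeasurableSpace 𝒯] [MeasurableSpace 𝒳]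
    (P : Measure Ω) [IsProbabilityMeasure P]
    (B J : ℕ) (α : ℝ) (hα : α ∈ Set.Ioo (0 : ℝ) 1)
    (θ : Fin (B + 1) → Ω → 𝒯) (X : Fin (B + 1) → Ω → 𝒳)
    (hmeas : ∀ i, Measurable (fun ω => (θ i ω, X i ω)))
    (hindep : iIndepFun (fun i ω => (θ i ω, X i ω)) P)
    (hident : ∀ i, P.map (fun ω => (θ i ω, X i ω)) =
      P.map (fun ω => (θ (Fin.last B) ω, X (Fin.last B) ω)))
    (A : Fin J → Set 𝒳) (hAmeas : ∀ j, MeasurableSet (A j))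
    (hAdisj : Pairwise (Function.onFun Disjoint A))
    (hAcover : (⋃ j, A j) = Set.univ)
    (s : 𝒯 → 𝒳 → ℝ) (hs : Measurable (fun p : 𝒯 × 𝒳 => s p.1 p.2)) :
    ∀ j : Fin J, 0 < P {ω | X (Fin.last B) ω ∈ A j} →
      1 - α ≤
        ((P[|{ω | X (Fin.last B) ω ∈ A j}])
          {ω | (s (θ (Fin.last B) ω) (X (Fin.last B) ω) : EReal) ≤
            localThreshold (fun i : Fin B => θ i.castSucc)
              (fun i : Fin B => X i.castSucc) s (A j) α ω}).toReal := by
  classical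
  intro j hj
  obtain ⟨hα0, hα1⟩ := hα
  set f : 𝒯 × 𝒳 → ℝ := fun p => s p.1 p.2 with hf_def
  set C : Set (𝒯 × 𝒳) := {p | p.2 ∈ A j} with hC_def
  have hCmeas : MeasurableSet C := measurable_snd (hAmeas j)
  set Y : Fin (B + 1) → Ω → 𝒯 × 𝒳 := fun i ω => (θ i ω, X i ω) with hY_def
  set joint : Ω → (Fin (B + 1) → 𝒯 × 𝒳) := fun ω i => Y i ω with hjoint_def
  have hjoint : Measurable joint := measurable_pi_lambda _ fun i => hmeas i
  set ν : Measure (𝒯 × 𝒳) := P.map (Y (Fin.last B)) with hν_def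
  haveI : IsProbabilityMeasure ν := Measure.isProbabilityMeasure_map (hmeas _).aemeasurable
  set E : Set Ω := {ω | X (Fin.last B) ω ∈ A j} with hE_def
  have hEmeas : MeasurableSet E := (hmeas (Fin.last B)) hCmeas
  -- the joint law is the product of the common marginal
  have hmap_eq : ∀ i, P.map (Y i) = ν := fun i => hident i
  have hμ : P.map joint = (Measure.pi fun _ : Fin (B + 1) => ν) := by
    refine (Measure.pi_eq fun sets hsets => ?_).symm
    rw [Measure.map_apply hjoint (MeasurableSet.univ_pi hsets)]
    have hpre : joint ⁻¹' (Set.univ.pi sets)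
        = ⋂ i ∈ (Finset.univ : Finset (Fin (B + 1))), Y i ⁻¹' sets i := by
      ext ω
      simp [hjoint_def, Set.mem_pi]
    rw [hpre, hindep.measure_inter_preimage_eq_mul Finset.univ (fun i _ => hsets i)]
    refine Finset.prod_congr rfl fun i _ => ?_
    rw [← Measure.map_apply (hmeas i) (hsets i), hmap_eq i]
  -- exchangeability of the good events
  have hswap : ∀ i, (Measure.pi fun _ : Fin (B + 1) => ν) (GG C f α i) = (Measure.pi fun _ : Fin (B + 1) => ν) (GG C f α (Fin.last B)) := by
    intro i
    set e : Equiv.Perm (Fin (B + 1)) := Equiv.swap i (Fin.last B) with he_def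
    have hmp : MeasurePreserving
        (⇑(MeasurableEquiv.piCongrLeft (fun _ : Fin (B + 1) => 𝒯 × 𝒳) e))
        (Measure.pi fun _ : Fin (B + 1) => ν) (Measure.pi fun _ : Fin (B + 1) => ν) :=
      measurePreserving_piCongrLeft (fun _ : Fin (B + 1) => ν) e
    have happ : ∀ (x : Fin (B + 1) → 𝒯 × 𝒳) (l : Fin (B + 1)),
        (MeasurableEquiv.piCongrLeft (fun _ : Fin (B + 1) => 𝒯 × 𝒳) e) x l
          = x (e.symm l) := by
      intro x l
      conv_lhs => rw [← Equiv.apply_symm_apply e l]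
      exact Equiv.piCongrLeft_apply_apply (fun _ : Fin (B + 1) => 𝒯 × 𝒳) e x (e.symm l)
    have hTset : (MeasurableEquiv.piCongrLeft (fun _ : Fin (B + 1) => 𝒯 × 𝒳) e)
        ⁻¹' (GG C f α (Fin.last B)) = GG C f α i := by
      ext x
      have hel : ∀ l, e.symm l = e l := fun l => by rw [Equiv.symm_swap]
      have hfun : (MeasurableEquiv.piCongrLeft (fun _ : Fin (B + 1) => 𝒯 × 𝒳) e) x
          = fun l => x (e l) := by
        funext l; rw [happ, hel]
      have : x ∈ (MeasurableEquiv.piCongrLeft (fun _ : Fin (B + 1) => 𝒯 × 𝒳) e)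
          ⁻¹' (GG C f α (Fin.last B))
          ↔ (fun l => x (e l)) ∈ GG C f α (Fin.last B) := by
        rw [Set.mem_preimage, hfun]
      rw [this, GG_perm]
      have : e (Fin.last B) = i := Equiv.swap_apply_right i (Fin.last B)
      rw [this]
    have h := hmp.measure_preimage (meas_GG hCmeas hs α (Fin.last B)).nullMeasurableSet
    rw [hTset] at h
    beta_reduce at h
    exact h
  -- sum of good-event probabilities equals the integral of the good count
  have hGmeas : ∀ i : Fin (B + 1), MeasurableSet (GG C f α i) :=
    fun i => meas_GG hCmeas hs α i
  have hsum_eq : ∑ i : Fin (B + 1), (Measure.pi fun _ : Fin (B + 1) => ν) (GG C f α i)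
      = ∫⁻ y, ((Finset.univ.filter fun i => y ∈ GG C f α i).card : ℝ≥0∞) ∂(Measure.pi fun _ : Fin (B + 1) => ν) := by
    calc ∑ i : Fin (B + 1), (Measure.pi fun _ : Fin (B + 1) => ν) (GG C f α i)
        = ∑ i : Fin (B + 1), ∫⁻ y, (GG C f α i).indicator 1 y ∂(Measure.pi fun _ : Fin (B + 1) => ν) := by
          exact Finset.sum_congr rfl fun i _ => (lintegral_indicator_one (hGmeas i)).symm
      _ = ∫⁻ y, ∑ i : Fin (B + 1), (GG C f α i).indicator 1 y ∂(Measure.pi fun _ : Fin (B + 1) => ν) :=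
          (lintegral_finset_sum _ fun i _ => measurable_const.indicator (hGmeas i)).symm
      _ = ∫⁻ y, ((Finset.univ.filter fun i => y ∈ GG C f α i).card : ℝ≥0∞) ∂(Measure.pi fun _ : Fin (B + 1) => ν) := by
          refine lintegral_congr fun y => ?_
          rw [Finset.card_filter]
          push_cast
          refine (Finset.sum_congr rfl fun i _ => ?_)
          by_cases h : y ∈ GG C f α i <;> simp [Set.indicator_apply, h]
  -- lower bound of the integrand
  have hlow : ∫⁻ y, ENNReal.ofReal (1 - α) * (ccount C y : ℝ≥0∞) ∂(Measure.pi fun _ : Fin (B + 1) => ν)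
      ≤ ∑ i : Fin (B + 1), (Measure.pi fun _ : Fin (B + 1) => ν) (GG C f α i) := by
    rw [hsum_eq]
    refine lintegral_mono fun y => ?_
    have h1 : ENNReal.ofReal (1 - α) * (ccount C y : ℝ≥0∞)
        ≤ (⌈(1 - α) * (ccount C y : ℝ)⌉₊ : ℝ≥0∞) := by
      rw [← ENNReal.ofReal_natCast (ccount C y), ← ENNReal.ofReal_mul (by linarith),
        ← ENNReal.ofReal_natCast ⌈(1 - α) * (ccount C y : ℝ)⌉₊]
      exact ENNReal.ofReal_le_ofReal (Nat.le_ceil _)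
    refine h1.trans ?_
    exact_mod_cast Nat.cast_le.mpr (GG_count C f (le_of_lt hα0) y)
  -- the expected in-cell count
  have hcell : ∀ i : Fin (B + 1), (Measure.pi fun _ : Fin (B + 1) => ν) {y : Fin (B + 1) → 𝒯 × 𝒳 | y i ∈ C} = ν C := by
    intro i
    have hset : {y : Fin (B + 1) → 𝒯 × 𝒳 | y i ∈ C} = (fun y => y i) ⁻¹' C := rfl
    rw [← hμ, hset, Measure.map_apply hjoint ((measurable_pi_apply i) hCmeas)]
    have : joint ⁻¹' ((fun y => y i) ⁻¹' C) = Y i ⁻¹' C := rfl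
    rw [this, ← Measure.map_apply (hmeas i) hCmeas, hmap_eq i]
  have hcnt_int : ∫⁻ y, (ccount C y : ℝ≥0∞) ∂(Measure.pi fun _ : Fin (B + 1) => ν)
      = (B + 1 : ℝ≥0∞) * ν C := by
    have hptw : ∀ y : Fin (B + 1) → 𝒯 × 𝒳, (ccount C y : ℝ≥0∞)
        = ∑ i : Fin (B + 1), ({y : Fin (B + 1) → 𝒯 × 𝒳 | y i ∈ C}).indicator 1 y := by
      intro y
      rw [show (ccount C y : ℝ≥0∞)
          = ((Finset.univ.filter fun i => y i ∈ C).card : ℝ≥0∞) from rfl,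
        Finset.card_filter]
      push_cast
      refine Finset.sum_congr rfl fun i _ => ?_
      by_cases h : y i ∈ C <;> simp [Set.indicator_apply, h]
    calc ∫⁻ y, (ccount C y : ℝ≥0∞) ∂(Measure.pi fun _ : Fin (B + 1) => ν)
        = ∫⁻ y, ∑ i : Fin (B + 1), ({y : Fin (B + 1) → 𝒯 × 𝒳 | y i ∈ C}).indicator 1 y
            ∂(Measure.pi fun _ : Fin (B + 1) => ν) := lintegral_congr hptw
      _ = ∑ i : Fin (B + 1), ∫⁻ y, ({y : Fin (B + 1) → 𝒯 × 𝒳 | y i ∈ C}).indicator 1 y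
            ∂(Measure.pi fun _ : Fin (B + 1) => ν) :=
          lintegral_finset_sum _ fun i _ =>
            measurable_const.indicator ((measurable_pi_apply i) hCmeas)
      _ = ∑ _i : Fin (B + 1), ν C := Finset.sum_congr rfl fun i _ =>
            (lintegral_indicator_one ((measurable_pi_apply i) hCmeas)).trans (hcell i)
      _ = (B + 1 : ℝ≥0∞) * ν C := by
            rw [Finset.sum_const, Finset.card_univ, Fintype.card_fin, nsmul_eq_mul]
            push_cast
            ring
  -- main inequality in ℝ≥0∞
  have hmain : ENNReal.ofReal (1 - α) * ν C ≤ (Measure.pi fun _ : Fin (B + 1) => ν) (GG C f α (Fin.last B)) := by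
    have h1 : ENNReal.ofReal (1 - α) * ((B + 1 : ℝ≥0∞) * ν C)
        ≤ (B + 1 : ℝ≥0∞) * (Measure.pi fun _ : Fin (B + 1) => ν) (GG C f α (Fin.last B)) := by
      have h2 : ∑ i : Fin (B + 1), (Measure.pi fun _ : Fin (B + 1) => ν) (GG C f α i)
          = (B + 1 : ℝ≥0∞) * (Measure.pi fun _ : Fin (B + 1) => ν) (GG C f α (Fin.last B)) := by
        rw [Finset.sum_congr rfl fun i _ => hswap i, Finset.sum_const, Finset.card_univ,
          Fintype.card_fin, nsmul_eq_mul]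
        push_cast
        ring
      calc ENNReal.ofReal (1 - α) * ((B + 1 : ℝ≥0∞) * ν C)
          = ENNReal.ofReal (1 - α) * ∫⁻ y, (ccount C y : ℝ≥0∞) ∂(Measure.pi fun _ : Fin (B + 1) => ν) := by rw [hcnt_int]
        _ = ∫⁻ y, ENNReal.ofReal (1 - α) * (ccount C y : ℝ≥0∞) ∂(Measure.pi fun _ : Fin (B + 1) => ν) :=
            (lintegral_const_mul _ (measurable_from_top.comp (meas_ccount hCmeas))).symm
        _ ≤ ∑ i : Fin (B + 1), (Measure.pi fun _ : Fin (B + 1) => ν) (GG C f α i) := hlow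
        _ = (B + 1 : ℝ≥0∞) * (Measure.pi fun _ : Fin (B + 1) => ν) (GG C f α (Fin.last B)) := h2
    have hne0 : (B + 1 : ℝ≥0∞) ≠ 0 := (lt_of_lt_of_le zero_lt_one le_add_self).ne' 
    have hnetop : (B + 1 : ℝ≥0∞) ≠ ⊤ := by
      simp [ENNReal.add_ne_top]
    rw [mul_comm, mul_assoc] at h1
    rw [mul_comm (ν C) _] at h1
    exact (ENNReal.mul_le_mul_iff_right hne0 hnetop).mp h1
  -- identify the coverage event with the good event for the test index
  set covSet : Set Ω := {ω | (s (θ (Fin.last B) ω) (X (Fin.last B) ω) : EReal) ≤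
      localThreshold (fun i : Fin B => θ i.castSucc)
        (fun i : Fin B => X i.castSucc) s (A j) α ω} with hcov_def
  have hiff : ∀ ω, ω ∈ covSet ∩ E ↔ joint ω ∈ GG C f α (Fin.last B) := by
    intro ω
    set c : Fin B → Prop := fun i => X i.castSucc ω ∈ A j with hc_def
    set g : Fin B → ℝ := fun i => s (θ i.castSucc ω) (X i.castSucc ω) with hg_def
    set Sc : ℝ := s (θ (Fin.last B) ω) (X (Fin.last B) ω) with hSc_def
    set n : ℕ := (Finset.univ.filter c).card with hn_def
    set k : ℕ := ⌈(1 - α) * ((n : ℝ) + 1)⌉₊ with hk_def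
    have hk1 : 1 ≤ k := by
      rw [hk_def]
      refine Nat.ceil_pos.mpr ?_
      have h1 : (0:ℝ) < 1 - α := by linarith
      exact mul_pos h1 (by linarith [Nat.cast_nonneg (α := ℝ) n])
    have hth : ω ∈ covSet ↔
        (Finset.univ.filter fun i => c i ∧ g i < Sc).card < k := by
      rw [hcov_def]
      simp only [Set.mem_setOf_eq, localThreshold]
      exact aux_thresh c g Sc k hk1
    constructor
    · rintro ⟨hcov, hEω⟩
      have hXE : X (Fin.last B) ω ∈ A j := hEω
      have hcc : ccount C (joint ω) = n + 1 := by
        rw [show ccount C (joint ω)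
            = (Finset.univ.filter fun i : Fin (B + 1) => X i ω ∈ A j).card from rfl,
          aux_card_castSucc (fun i : Fin (B + 1) => X i ω ∈ A j)]
        simp [hXE, hn_def, hc_def]
      have hrr : crank C f (joint ω) (Fin.last B)
          = (Finset.univ.filter fun i => c i ∧ g i < Sc).card := by
        rw [show crank C f (joint ω) (Fin.last B)
            = (Finset.univ.filter fun l : Fin (B + 1) =>
                X l ω ∈ A j ∧ s (θ l ω) (X l ω) < Sc).card from rfl,
          aux_card_castSucc (fun l : Fin (B + 1) =>
            X l ω ∈ A j ∧ s (θ l ω) (X l ω) < Sc)]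
        simp [hc_def, hg_def, hSc_def]
      refine ⟨hXE, ?_⟩
      rw [hrr, hcc]
      have : ((n + 1 : ℕ) : ℝ) = (n : ℝ) + 1 := by push_cast; ring
      rw [this]
      exact hth.mp hcov
    · intro hG
      obtain ⟨hC1, hC2⟩ := hG
      have hXE : X (Fin.last B) ω ∈ A j := hC1
      have hcc : ccount C (joint ω) = n + 1 := by
        rw [show ccount C (joint ω)
            = (Finset.univ.filter fun i : Fin (B + 1) => X i ω ∈ A j).card from rfl,
          aux_card_castSucc (fun i : Fin (B + 1) => X i ω ∈ A j)]
        simp [hXE, hn_def, hc_def]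
      have hrr : crank C f (joint ω) (Fin.last B)
          = (Finset.univ.filter fun i => c i ∧ g i < Sc).card := by
        rw [show crank C f (joint ω) (Fin.last B)
            = (Finset.univ.filter fun l : Fin (B + 1) =>
                X l ω ∈ A j ∧ s (θ l ω) (X l ω) < Sc).card from rfl,
          aux_card_castSucc (fun l : Fin (B + 1) =>
            X l ω ∈ A j ∧ s (θ l ω) (X l ω) < Sc)]
        simp [hc_def, hg_def, hSc_def]
      rw [hrr, hcc] at hC2
      have : ((n + 1 : ℕ) : ℝ) = (n : ℝ) + 1 := by push_cast; ring
      rw [this] at hC2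
      exact ⟨hth.mpr hC2, hXE⟩
  have hset : covSet ∩ E = joint ⁻¹' (GG C f α (Fin.last B)) := Set.ext hiff
  have hPint : P (covSet ∩ E) = (Measure.pi fun _ : Fin (B + 1) => ν) (GG C f α (Fin.last B)) := by
    rw [hset, ← Measure.map_apply hjoint (hGmeas _), hμ]
  have hνE : ν C = P E := by
    rw [hν_def, Measure.map_apply (hmeas _) hCmeas]
    rfl
  -- conclude
  have hcond : (P[|E]) covSet = (P E)⁻¹ * P (covSet ∩ E) := by
    rw [cond_apply hEmeas, Set.inter_comm]
  have hPEne : P E ≠ 0 := hj.ne'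
  have hPEtop : P E ≠ ⊤ := measure_ne_top P E
  have hge : ENNReal.ofReal (1 - α) ≤ (P[|E]) covSet := by
    rw [hcond]
    calc ENNReal.ofReal (1 - α)
        = (P E)⁻¹ * (ENNReal.ofReal (1 - α) * P E) := by
          rw [mul_comm (ENNReal.ofReal (1 - α)) (P E), ← mul_assoc,
            ENNReal.inv_mul_cancel hPEne hPEtop, one_mul]
      _ ≤ (P E)⁻¹ * P (covSet ∩ E) := by
          refine mul_le_mul_right ?_ _
          rw [hPint, ← hνE]
          exact hmain
  have hub : (P[|E]) covSet ≤ 1 := by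
    rw [hcond]
    calc (P E)⁻¹ * P (covSet ∩ E) ≤ (P E)⁻¹ * P E :=
          mul_le_mul_right (measure_mono Set.inter_subset_right) _
      _ = 1 := ENNReal.inv_mul_cancel hPEne hPEtop
  have hne : (P[|E]) covSet ≠ ⊤ := (hub.trans_lt (by norm_num)).ne
  have := ENNReal.toReal_mono hne hge
  rwa [ENNReal.toReal_ofReal (by linarith)] at this
end
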